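/- Let D be a digraph, X a set of vertices of D, and ℓ a positive integer. Then either D contains ℓ directed odd X-walks such that every vertex of D is used at most twice in total across all the walks (counting multiplicity of occurrence), or there is a set Y of at most ℓ−1 vertices of D such that D−Y contains no directed odd X-walk. -/

import Mathlib

variable {V : Type}

/-- `w` is a directed walk of length `n` in the digraph with edge relation `R`. -/
def IsWalkOn (R : V → V → Prop) (w : ℕ → V) (n : ℕ) : Prop :=
  ∀ i < n, R (w i) (w (i + 1))

/-- The set of vertices used by the walk `w` of length `n`. -/
def walkVerts (w : ℕ → V) (n : ℕ) : Set V :=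
  {v | ∃ i ≤ n, w i = v}

/-- The set of directed edges used by the walk `w` of length `n`. -/
def walkEdges (w : ℕ → V) (n : ℕ) : Set (V × V) :=
  {e | ∃ i < n, w i = e.1 ∧ w (i + 1) = e.2}

/-- A directed path: a walk with no repeated vertices. -/
def IsPathOn (R : V → V → Prop) (w : ℕ → V) (n : ℕ) : Prop :=
  IsWalkOn R w n ∧ ∀ i ≤ n, ∀ j ≤ n, w i = w j → i = j

/-- A directed cycle of length `n`: a closed walk with no repeated vertices
except that the last vertex equals the first. -/
def IsCycleOn (R : V → V → Prop) (w : ℕ → V) (n : ℕ) : Prop :=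
  0 < n ∧ IsWalkOn R w n ∧ w n = w 0 ∧ ∀ i < n, ∀ j < n, w i = w j → i = j

/-- `v` is reachable from `u` by a directed walk all of whose vertices lie in `S`. -/
def ReachIn (R : V → V → Prop) (S : Set V) (u v : V) : Prop :=
  ∃ w n, IsWalkOn R w n ∧ w 0 = u ∧ w n = v ∧ ∀ i ≤ n, w i ∈ S

/-- Every two vertices of `C` are mutually reachable inside `S`. -/
def StrongIn (R : V → V → Prop) (S C : Set V) : Prop :=
  ∀ u ∈ C, ∀ v ∈ C, ReachIn R S u v

/-- `C` is a strongly connected component of the subgraph induced on `S`. -/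
def IsSCCOf (R : V → V → Prop) (S C : Set V) : Prop :=
  C.Nonempty ∧ C ⊆ S ∧ StrongIn R S C ∧
    ∀ C', C ⊆ C' → C' ⊆ S → StrongIn R S C' → C' = C

/-- A directed `X`-walk: endpoints in `X`, all internal vertices outside `X`. -/
def IsXWalk (R : V → V → Prop) (X : Set V) (w : ℕ → V) (n : ℕ) : Prop :=
  IsWalkOn R w n ∧ w 0 ∈ X ∧ w n ∈ X ∧ ∀ i, 0 < i → i < n → w i ∉ X

/-- `S` meets every directed odd cycle. -/
def HitsOdd (R : V → V → Prop) (S : Set V) : Prop :=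
  ∀ c m, IsCycleOn R c m → Odd m → ∃ i < m, c i ∈ S

/-- `S` meets every directed odd cycle of the subgraph induced on `W`. -/
def HitsOddIn (R : V → V → Prop) (S W : Set V) : Prop :=
  ∀ c m, IsCycleOn R c m → Odd m → walkVerts c m ⊆ W → ∃ i < m, c i ∈ S

/-- A half-integral packing of `k` directed odd cycles: every vertex lies in at most
two of the `k` cycles. -/
def HalfPackOdd (R : V → V → Prop) (k : ℕ) : Prop :=
  ∃ (c : Fin k → ℕ → V) (len : Fin k → ℕ),
    (∀ i, IsCycleOn R (c i) (len i) ∧ Odd (len i)) ∧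
    ∀ v, {i | v ∈ walkVerts (c i) (len i)}.ncard ≤ 2

/-- A linkage of order `s` from `A` to `B` avoiding `Z`: `s` pairwise vertex-disjoint
directed paths from `A` to `B`, none of which meets `Z`. -/
def ExLinkage (R : V → V → Prop) (A B Z : Set V) (s : ℕ) : Prop :=
  ∃ (P : Fin s → ℕ → V) (len : Fin s → ℕ),
    (∀ i, IsPathOn R (P i) (len i) ∧ P i 0 ∈ A ∧ P i (len i) ∈ B ∧
      Disjoint (walkVerts (P i) (len i)) Z) ∧
    ∀ i j, i ≠ j → Disjoint (walkVerts (P i) (len i)) (walkVerts (P j) (len j))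

/-- `T` is `r`-well-linked: for all disjoint equal-size subsets `A, B ⊆ T` of size at
least `r`, there are linkages of order `|A|` from `A` to `B` and from `B` to `A` in
`G - (T \ (A ∪ B))`. -/
def WellLinked (R : V → V → Prop) (T : Finset V) (r : ℕ) : Prop :=
  ∀ A B : Finset V, A ⊆ T → B ⊆ T → Disjoint A B → A.card = B.card → r ≤ A.card →
    ExLinkage R (↑A) (↑B) ((↑T : Set V) \ (↑A ∪ ↑B)) A.card ∧
    ExLinkage R (↑B) (↑A) ((↑T : Set V) \ (↑A ∪ ↑B)) A.card

/-- `S` is `k`-linked: for every vertex set `X` with `|X| < k`, there is a unique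
strongly connected component of `G - X` containing more than half of the vertices
of `S`. -/
def KLinked (R : V → V → Prop) (S : Finset V) (k : ℕ) : Prop :=
  ∀ X : Finset V, X.card < k →
    ∃! C : Set V, IsSCCOf R ((↑X : Set V)ᶜ) C ∧ S.card < 2 * ((↑S : Set V) ∩ C).ncard

/-- A bramble: a family of (vertex sets of) strongly connected subgraphs which
pairwise either intersect or are joined by edges in both directions. -/
def IsBramble (R : V → V → Prop) (B : Set (Set V)) : Prop :=
  (∀ C ∈ B, C.Nonempty ∧ StrongIn R C C) ∧
  ∀ C₁ ∈ B, ∀ C₂ ∈ B, (C₁ ∩ C₂).Nonempty ∨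
    ((∃ u ∈ C₁, ∃ v ∈ C₂, R u v) ∧ (∃ u ∈ C₂, ∃ v ∈ C₁, R u v))

/-- A walk in the underlying undirected graph of the digraph with edge relation `R`. -/
def IsUWalkOn (R : V → V → Prop) (w : ℕ → V) (n : ℕ) : Prop :=
  ∀ i < n, R (w i) (w (i + 1)) ∨ R (w (i + 1)) (w i)

/-- A separation `(C, D)` of a digraph: `C ∪ D = V` and there is no edge from
`C \ D` to `D \ C`. -/
def IsSeparation (R : V → V → Prop) (C D : Set V) : Prop :=
  C ∪ D = Set.univ ∧ ∀ u ∈ C \ D, ∀ v ∈ D \ C, ¬ R u v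

section Generic
variable {W : Type}

lemma cross_up (g : ℕ → Prop) : ∀ {a b : ℕ}, a ≤ b → ¬ g a → g b →
    ∃ j, a ≤ j ∧ j < b ∧ ¬ g j ∧ g (j+1) := by
  intro a b
  induction b with
  | zero => intro hab ha hb; interval_cases a; exact absurd hb ha
  | succ b ih =>
    intro hab ha hb
    rcases Nat.lt_or_ge a (b+1) with h | h
    · by_cases hgb : g b
      · obtain ⟨j, hj1, hj2, hj3⟩ := ih (by omega) ha hgb
        exact ⟨j, hj1, hj2.trans (Nat.lt_succ_self b), hj3⟩
      · exact ⟨b, by omega, Nat.lt_succ_self b, hgb, hb⟩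
    · have : a = b + 1 := by omega
      subst this; exact absurd hb ha

lemma cross_down (g : ℕ → Prop) {b : ℕ} (ha : g 0) (hb : ¬ g b) :
    ∃ j < b, g j ∧ ¬ g (j+1) := by
  obtain ⟨j, _, hj2, hj3, hj4⟩ := cross_up (fun i => ¬ g i) (Nat.zero_le b) (not_not_intro ha) hb
  exact ⟨j, hj2, not_not.mp hj3, hj4⟩

lemma exists_path_of_walk (r : W → W → Prop) :
    ∀ n (w : ℕ → W), (∀ i < n, r (w i) (w (i+1))) →
    ∃ (p : ℕ → W) (m : ℕ), (∀ i < m, r (p i) (p (i+1))) ∧ p 0 = w 0 ∧ p m = w n ∧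
      (∀ i ≤ m, ∀ j ≤ m, p i = p j → i = j) ∧ (∀ i ≤ m, ∃ j ≤ n, w j = p i) := by
  intro n
  induction n using Nat.strong_induction_on with
  | _ n ih =>
    intro w hw
    by_cases hinj : ∀ i ≤ n, ∀ j ≤ n, w i = w j → i = j
    · exact ⟨w, n, hw, rfl, rfl, hinj, fun i hi => ⟨i, hi, rfl⟩⟩
    · push_neg at hinj
      obtain ⟨i, hi, j, hj, heq, hne⟩ := hinj
      obtain ⟨i, j, hi, hj, hij, heq⟩ : ∃ i j, i ≤ n ∧ j ≤ n ∧ i < j ∧ w i = w j := by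
        rcases Nat.lt_or_ge i j with h | h
        · exact ⟨i, j, hi, hj, h, heq⟩
        · exact ⟨j, i, hj, hi, lt_of_le_of_ne h (Ne.symm hne), heq.symm⟩
      have hji1 : 1 ≤ j - i := by omega
      have hjin : j - i ≤ n := by omega
      set m' := n - (j - i) with hm'
      have hadd : m' + (j - i) = n := by omega
      set w' : ℕ → W := fun t => if t ≤ i then w t else w (t + (j - i)) with hw'
      have hlen : m' < n := by omega
      have hw'w : ∀ t, t ≤ m' → ∃ s ≤ n, w s = w' t := by
        intro t ht
        by_cases h : t ≤ i
        · exact ⟨t, by omega, by simp [hw', h]⟩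
        · exact ⟨t + (j-i), by omega, by simp [hw', h]⟩
      have hstep : ∀ t, t < m' → r (w' t) (w' (t+1)) := by
        intro t ht
        have htn : t + (j - i) < n := by omega
        by_cases h : t + 1 ≤ i
        · have h' : t ≤ i := by omega
          simpa [hw', h, h'] using hw t (by omega)
        · have hkey : w' (t+1) = w (t + 1 + (j - i)) := by simp [hw', h]
          by_cases h2 : t ≤ i
          · have hti : t = i := by omega
            have h3 : w' t = w (t + (j-i)) := by
              have e1 : t + (j - i) = j := by omega
              simp only [hw', if_pos h2]
              rw [e1, hti]
              exact heq
            rw [h3, hkey, show t + 1 + (j - i) = t + (j-i) + 1 by omega]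
            exact hw (t + (j-i)) htn
          · rw [hkey, show t + 1 + (j - i) = t + (j-i) + 1 by omega]
            simp only [hw', if_neg h2]
            exact hw (t + (j-i)) htn
      obtain ⟨p, m, h1, h2, h3, h4, h5⟩ := ih m' hlen w' hstep
      refine ⟨p, m, h1, ?_, ?_, h4, ?_⟩
      · rw [h2]; simp [hw']
      · rw [h3]; simp only [hw']
        by_cases h : m' ≤ i
        · have hji : j = n := by omega
          have hmi : m' = i := by omega
          rw [if_pos h, hmi, heq, hji]
        · rw [if_neg h, hadd]
      · intro t ht
        obtain ⟨u, hu1, hu2⟩ := h5 t ht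
        obtain ⟨s, hs1, hs2⟩ := hw'w u hu1
        exact ⟨s, hs1, hs2.trans hu2⟩

lemma walk_of_rtg {r : W → W → Prop} {x y : W} (h : Relation.ReflTransGen r x y) :
    ∃ (w : ℕ → W) (n : ℕ), w 0 = x ∧ w n = y ∧ ∀ i < n, r (w i) (w (i+1)) := by
  induction h with
  | refl => exact ⟨fun _ => x, 0, rfl, rfl, by omega⟩
  | @tail b c hab hbc ih =>
    obtain ⟨w, n, h1, h2, h3⟩ := ih
    refine ⟨fun t => if t ≤ n then w t else c, n+1, by simp [h1], by simp, ?_⟩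
    intro i hi
    by_cases h : i + 1 ≤ n
    · simpa [h, Nat.le_of_succ_le h] using h3 i (by omega)
    · have hin : i = n := by omega
      subst hin
      simp only [le_refl, if_pos, if_neg h, h2]
      simpa [h2] using hbc
section Flow
variable {W : Type}

def Arc (Q : W → W → Prop) (x y : W × Bool) : Prop :=
  (x.2 = false ∧ y.2 = true ∧ x.1 = y.1) ∨ (x.2 = true ∧ y.2 = false ∧ Q x.1 y.1)

def dout (F : Set ((W × Bool) × (W × Bool))) (x : W × Bool) : Set (W × Bool) := {y | (x, y) ∈ F}
def din (F : Set ((W × Bool) × (W × Bool))) (x : W × Bool) : Set (W × Bool) := {y | (y, x) ∈ F}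

structure IsFlow (Q : W → W → Prop) (A B : Set W) (F : Set ((W × Bool) × (W × Bool))) : Prop where
  fin : F.Finite
  legal : ∀ e ∈ F, Arc Q e.1 e.2
  cons : ∀ x : W × Bool, ¬(x.1 ∈ A ∧ x.2 = false) → ¬(x.1 ∈ B ∧ x.2 = true) →
    (dout F x).ncard = (din F x).ncard

variable {Q : W → W → Prop} {A B : Set W} {F : Set ((W × Bool) × (W × Bool))}

lemma dout_finite (hfin : F.Finite) (x : W × Bool) : (dout F x).Finite := by
  apply (hfin.image Prod.snd).subset
  rintro y hy; exact ⟨(x, y), hy, rfl⟩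

lemma din_finite (hfin : F.Finite) (x : W × Bool) : (din F x).Finite := by
  apply (hfin.image Prod.fst).subset
  rintro y hy; exact ⟨(y, x), hy, rfl⟩

lemma arc_out_false {x : W × Bool} {v : W} (h : Arc Q (v, false) x) : x = (v, true) := by
  rcases h with ⟨_, h2, h3⟩ | ⟨h1, _, _⟩
  · exact Prod.ext h3.symm h2
  · simp at h1

lemma arc_in_true {x : W × Bool} {v : W} (h : Arc Q x (v, true)) : x = (v, false) := by
  rcases h with ⟨h1, _, h3⟩ | ⟨_, h2, _⟩
  · exact Prod.ext h3 h1
  · simp at h2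

lemma arc_in_srcA (hA : ∀ u v, Q u v → v ∉ A) {x : W × Bool} {a : W} (ha : a ∈ A)
    (h : Arc Q x (a, false)) : False := by
  rcases h with ⟨_, h2, _⟩ | ⟨_, _, h3⟩
  · simp at h2
  · exact hA _ _ h3 ha

lemma arc_out_snkB (hB : ∀ u v, Q u v → u ∉ B) {x : W × Bool} {b : W} (hb : b ∈ B)
    (h : Arc Q (b, true) x) : False := by
  rcases h with ⟨h1, _, _⟩ | ⟨_, _, h3⟩
  · simp at h1
  · exact hB _ _ h3 hb

lemma dout_false_sub (hF : IsFlow Q A B F) (v : W) : dout F (v, false) ⊆ {(v, true)} := by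
  intro y hy
  exact arc_out_false (hF.legal _ hy)

lemma din_true_sub (hF : IsFlow Q A B F) (v : W) : din F (v, true) ⊆ {(v, false)} := by
  intro y hy
  exact arc_in_true (hF.legal _ hy)

lemma din_srcA (hF : IsFlow Q A B F) (hA : ∀ u v, Q u v → v ∉ A) {a : W} (ha : a ∈ A) :
    din F (a, false) = ∅ := by
  ext y; simp only [Set.mem_empty_iff_false, iff_false]
  intro hy; exact arc_in_srcA hA ha (hF.legal _ hy)

lemma dout_snkB (hF : IsFlow Q A B F) (hB : ∀ u v, Q u v → u ∉ B) {b : W} (hb : b ∈ B) :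
    dout F (b, true) = ∅ := by
  ext y; simp only [Set.mem_empty_iff_false, iff_false]
  intro hy; exact arc_out_snkB hB hb (hF.legal _ hy)

lemma outdeg_le_one (hF : IsFlow Q A B F) (hA : ∀ u v, Q u v → v ∉ A)
    (hB : ∀ u v, Q u v → u ∉ B) (x : W × Bool) : (dout F x).ncard ≤ 1 := by
  obtain ⟨v, b⟩ := x
  cases b
  · calc (dout F (v, false)).ncard ≤ ({((v : W), true)} : Set (W × Bool)).ncard :=
          Set.ncard_le_ncard (dout_false_sub hF v) (Set.finite_singleton _)
      _ = 1 := Set.ncard_singleton _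
  · by_cases hv : v ∈ B
    · simp [dout_snkB hF hB hv]
    · rw [hF.cons (v, true) (by simp) (by simp [hv])]
      calc (din F (v, true)).ncard ≤ ({((v : W), false)} : Set (W × Bool)).ncard :=
            Set.ncard_le_ncard (din_true_sub hF v) (Set.finite_singleton _)
        _ = 1 := Set.ncard_singleton _

lemma indeg_le_one (hF : IsFlow Q A B F) (hA : ∀ u v, Q u v → v ∉ A)
    (hB : ∀ u v, Q u v → u ∉ B) (x : W × Bool) : (din F x).ncard ≤ 1 := by
  obtain ⟨v, b⟩ := x
  cases b
  · by_cases hv : v ∈ A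
    · simp [din_srcA hF hA hv]
    · rw [← hF.cons (v, false) (by simp [hv]) (by simp)]
      calc (dout F (v, false)).ncard ≤ ({((v : W), true)} : Set (W × Bool)).ncard :=
            Set.ncard_le_ncard (dout_false_sub hF v) (Set.finite_singleton _)
        _ = 1 := Set.ncard_singleton _
  · calc (din F (v, true)).ncard ≤ ({((v : W), false)} : Set (W × Bool)).ncard :=
          Set.ncard_le_ncard (din_true_sub hF v) (Set.finite_singleton _)
      _ = 1 := Set.ncard_singleton _

lemma flow_fun (hF : IsFlow Q A B F) (hA : ∀ u v, Q u v → v ∉ A)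
    (hB : ∀ u v, Q u v → u ∉ B) {x y z : W × Bool} (h1 : (x, y) ∈ F) (h2 : (x, z) ∈ F) :
    y = z := by
  have := outdeg_le_one hF hA hB x
  exact (Set.ncard_le_one (dout_finite hF.fin x)).mp this y h1 z h2

lemma flow_inj (hF : IsFlow Q A B F) (hA : ∀ u v, Q u v → v ∉ A)
    (hB : ∀ u v, Q u v → u ∉ B) {x y z : W × Bool} (h1 : (y, x) ∈ F) (h2 : (z, x) ∈ F) :
    y = z := by
  have := indeg_le_one hF hA hB x
  exact (Set.ncard_le_one (din_finite hF.fin x)).mp this y h1 z h2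

def Srcs (A : Set W) (F : Set ((W × Bool) × (W × Bool))) : Set W :=
  {a | a ∈ A ∧ ((a, false), (a, true)) ∈ F}

lemma srcs_finite (hfin : F.Finite) : (Srcs A F).Finite := by
  apply (hfin.image (fun e => e.1.1)).subset
  rintro a ⟨_, ha⟩; exact ⟨_, ha, rfl⟩

def Resid (Q : W → W → Prop) (F : Set ((W × Bool) × (W × Bool))) (x y : W × Bool) : Prop :=
  (Arc Q x y ∧ (x, y) ∉ F) ∨ (y, x) ∈ F

def Rch (Q : W → W → Prop) (A : Set W) (F : Set ((W × Bool) × (W × Bool))) :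
    Set (W × Bool) :=
  {x | ∃ a ∈ A, Relation.ReflTransGen (Resid Q F) (a, false) x}

lemma rch_src {a : W} (ha : a ∈ A) : ((a : W), false) ∈ Rch Q A F :=
  ⟨a, ha, Relation.ReflTransGen.refl⟩

lemma rch_step {x y : W × Bool} (hx : x ∈ Rch Q A F) (h : Resid Q F x y) :
    y ∈ Rch Q A F := by
  obtain ⟨a, ha, hr⟩ := hx
  exact ⟨a, ha, hr.tail h⟩

lemma rch_pred {x : W × Bool} (hx : x ∈ Rch Q A F) (hxt : x.2 = true) :
    ∃ y ∈ Rch Q A F, Resid Q F y x := by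
  obtain ⟨a, ha, hr⟩ := hx
  rcases (Relation.ReflTransGen.cases_tail hr) with h | ⟨y, h1, h2⟩
  · rw [h] at hxt; simp at hxt
  · exact ⟨y, ⟨a, ha, h1⟩, h2⟩



set_option maxHeartbeats 2000000 in
lemma augment (hF : IsFlow Q A B F) (hA : ∀ u v, Q u v → v ∉ A)
    (hB : ∀ u v, Q u v → u ∉ B)
    (hb : ∃ b ∈ B, ((b : W), true) ∈ Rch Q A F) :
    ∃ F', IsFlow Q A B F' ∧ (Srcs A F').ncard = (Srcs A F).ncard + 1 := by
  obtain ⟨b, hbB, a, haA, hrtg⟩ := hb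
  obtain ⟨w, nw, hw0, hwn, hwstep⟩ := walk_of_rtg hrtg
  obtain ⟨p, n, hstep, hp0, hpn, hpinj, -⟩ := exists_path_of_walk (Resid Q F) nw w hwstep
  rw [hw0] at hp0; rw [hwn] at hpn
  have hn1 : 1 ≤ n := by
    rcases Nat.eq_zero_or_pos n with h | h
    · exfalso; rw [h, hp0] at hpn; simpa using congrArg Prod.snd hpn
    · exact h
  -- p never revisits A × {false} after position 0
  have K1 : ∀ t, 1 ≤ t → t ≤ n → ∀ a' ∈ A, p t ≠ (a', false) := by
    intro t ht1 htn a' ha' heq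
    have htln : t < n := by
      rcases Nat.lt_or_ge t n with h | h
      · exact h
      · exfalso
        have : t = n := by omega
        rw [this, hpn] at heq
        simpa using congrArg Prod.snd heq
    have hres : Resid Q F (p (t-1)) (p t) := by
      have := hstep (t-1) (by omega)
      rwa [show t - 1 + 1 = t by omega] at this
    rcases hres with ⟨harc, -⟩ | hrev
    · rw [heq] at harc; exact arc_in_srcA hA ha' harc
    · rw [heq] at hrev
      have harc := hF.legal _ hrev
      have hpt1 : p (t-1) = (a', true) := arc_out_false harc
      have hres2 := hstep t htln
      rcases hres2 with ⟨harc2, -⟩ | hrev2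
      · rw [heq] at harc2
        have : p (t+1) = (a', true) := arc_out_false harc2
        have := hpinj (t+1) (by omega) (t-1) (by omega) (this.trans hpt1.symm)
        omega
      · rw [heq] at hrev2
        exact arc_in_srcA hA ha' (hF.legal _ hrev2)
  set Rv : ℕ → Prop := fun t => (p (t+1), p t) ∈ F with hRv
  have hfwd : ∀ t, t < n → ¬ Rv t → Arc Q (p t) (p (t+1)) ∧ (p t, p (t+1)) ∉ F :=
    fun t ht hrv => (hstep t ht).resolve_right hrv
  -- step 0
  have h00 : ¬ Rv 0 := by
    intro h
    rw [hRv] at h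
    simp only [hp0] at h
    exact arc_in_srcA hA haA (hF.legal _ h)
  have h01 : p 1 = ((a : W), true) := by
    have := (hfwd 0 hn1 h00).1
    rw [hp0] at this
    exact arc_out_false this
  have h02 : (((a : W), false), ((a : W), true)) ∉ F := by
    have := (hfwd 0 hn1 h00).2
    rwa [hp0, h01] at this
  set Rev : Set ((W × Bool) × (W × Bool)) := {e | ∃ t, t < n ∧ Rv t ∧ e = (p (t+1), p t)}
    with hRevDef
  set Fwd : Set ((W × Bool) × (W × Bool)) := {e | ∃ t, t < n ∧ ¬ Rv t ∧ e = (p t, p (t+1))}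
    with hFwdDef
  set F' : Set ((W × Bool) × (W × Bool)) := (F \ Rev) ∪ Fwd with hF'Def
  have hmem : ∀ e, e ∈ F' ↔ (e ∈ F ∧ e ∉ Rev) ∨ e ∈ Fwd := by
    intro e; simp [hF'Def, Set.mem_union, Set.mem_diff]
  have hfinF' : F'.Finite := by
    apply Set.Finite.union (hF.fin.diff)
    apply ((Set.finite_Iio n).image (fun t => (p t, p (t+1)))).subset
    rintro e ⟨t, ht, -, rfl⟩
    exact ⟨t, ht, rfl⟩
  have hlegal : ∀ e ∈ F', Arc Q e.1 e.2 := by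
    intro e he
    rcases (hmem e).mp he with ⟨hf, -⟩ | hfw
    · exact hF.legal _ hf
    · obtain ⟨t, ht, hrv, rfl⟩ := hfw
      exact (hfwd t ht hrv).1
  have hcons : ∀ x : W × Bool, ¬(x.1 ∈ A ∧ x.2 = false) → ¬(x.1 ∈ B ∧ x.2 = true) →
      (dout F' x).ncard = (din F' x).ncard := by
    intro x hxA hxB
    by_cases hon : ∃ j, j ≤ n ∧ p j = x
    · obtain ⟨j, hjn, hpj⟩ := hon
      have hj1 : 1 ≤ j := by
        rcases Nat.eq_zero_or_pos j with h | h
        · exfalso; rw [h, hp0] at hpj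
          exact hxA (by rw [← hpj]; exact ⟨haA, rfl⟩)
        · exact h
      have hjltn : j < n := by
        rcases Nat.lt_or_ge j n with h | h
        · exact h
        · exfalso
          have : j = n := by omega
          rw [this, hpn] at hpj
          exact hxB (by rw [← hpj]; exact ⟨hbB, rfl⟩)
      have hjuniq : ∀ t, t ≤ n → p t = x → t = j :=
        fun t ht h => hpinj t ht j hjn (h.trans hpj.symm)
      have coutRev : ∀ y, (x, y) ∈ Rev ↔ (Rv (j-1) ∧ y = p (j-1)) := by
        intro y
        constructor
        · rintro ⟨t, htn, hrv, he⟩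
          have hx : x = p (t+1) := congrArg Prod.fst he
          have hy : y = p t := congrArg Prod.snd he
          have : t + 1 = j := hjuniq (t+1) (by omega) hx.symm
          have ht' : t = j - 1 := by omega
          rw [ht'] at hrv hy
          exact ⟨hrv, hy⟩
        · rintro ⟨hrv, rfl⟩
          exact ⟨j - 1, by omega, hrv, by rw [show j - 1 + 1 = j by omega, hpj]⟩
      have coutFwd : ∀ y, (x, y) ∈ Fwd ↔ (¬ Rv j ∧ y = p (j+1)) := by
        intro y
        constructor
        · rintro ⟨t, htn, hrv, he⟩
          have hx : x = p t := congrArg Prod.fst he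
          have hy : y = p (t+1) := congrArg Prod.snd he
          have : t = j := hjuniq t (by omega) hx.symm
          rw [this] at hrv hy
          exact ⟨hrv, hy⟩
        · rintro ⟨hrv, rfl⟩
          exact ⟨j, hjltn, hrv, by rw [hpj]⟩
      have cinRev : ∀ y, (y, x) ∈ Rev ↔ (Rv j ∧ y = p (j+1)) := by
        intro y
        constructor
        · rintro ⟨t, htn, hrv, he⟩
          have hy : y = p (t+1) := congrArg Prod.fst he
          have hx : x = p t := congrArg Prod.snd he
          have : t = j := hjuniq t (by omega) hx.symm
          rw [this] at hrv hy
          exact ⟨hrv, hy⟩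
        · rintro ⟨hrv, rfl⟩
          exact ⟨j, hjltn, hrv, by rw [hpj]⟩
      have cinFwd : ∀ y, (y, x) ∈ Fwd ↔ (¬ Rv (j-1) ∧ y = p (j-1)) := by
        intro y
        constructor
        · rintro ⟨t, htn, hrv, he⟩
          have hy : y = p t := congrArg Prod.fst he
          have hx : x = p (t+1) := congrArg Prod.snd he
          have : t + 1 = j := hjuniq (t+1) (by omega) hx.symm
          have ht' : t = j - 1 := by omega
          rw [ht'] at hrv hy
          exact ⟨hrv, hy⟩
        · rintro ⟨hrv, rfl⟩
          exact ⟨j - 1, by omega, hrv, by rw [show j - 1 + 1 = j by omega, hpj]⟩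
      have hne : p (j-1) ≠ p (j+1) := by
        intro h
        have := hpinj (j-1) (by omega) (j+1) (by omega) h
        omega
      have hconsx := hF.cons x hxA hxB
      by_cases hr1 : Rv (j-1) <;> by_cases hr2 : Rv j
      · -- both reverse : remove out-arc p (j-1) and in-arc p (j+1)
        have hdo : dout F' x = dout F x \ {p (j-1)} := by
          ext y
          simp only [dout, Set.mem_setOf_eq, Set.mem_diff, Set.mem_singleton_iff,
            hmem, coutRev, coutFwd]
          tauto
        have hdi : din F' x = din F x \ {p (j+1)} := by
          ext y
          simp only [din, Set.mem_setOf_eq, Set.mem_diff, Set.mem_singleton_iff,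
            hmem, cinRev, cinFwd]
          tauto
        have hmo : p (j-1) ∈ dout F x := by
          have : (p j, p (j-1)) ∈ F := by
            have := hr1
            rwa [hRv, show j - 1 + 1 = j by omega] at this
          rwa [hpj] at this
        have hmi : p (j+1) ∈ din F x := by
          have : (p (j+1), p j) ∈ F := hr2
          rwa [hpj] at this
        rw [hdo, hdi]
        have e1 := Set.ncard_diff_singleton_add_one hmo (dout_finite hF.fin x)
        have e2 := Set.ncard_diff_singleton_add_one hmi (din_finite hF.fin x)
        omega
      · -- arrive reverse, leave forward
        have hdo : dout F' x = insert (p (j+1)) (dout F x \ {p (j-1)}) := by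
          ext y
          simp only [dout, Set.mem_setOf_eq, Set.mem_insert_iff, Set.mem_diff,
            Set.mem_singleton_iff, hmem, coutRev, coutFwd]
          tauto
        have hdi : din F' x = din F x := by
          ext y
          simp only [din, Set.mem_setOf_eq, hmem, cinRev, cinFwd]
          tauto
        have hmo : p (j-1) ∈ dout F x := by
          have : (p j, p (j-1)) ∈ F := by
            have := hr1
            rwa [hRv, show j - 1 + 1 = j by omega] at this
          rwa [hpj] at this
        have hnmo : p (j+1) ∉ dout F x \ {p (j-1)} := by
          rintro ⟨hmem', -⟩
          have := (hfwd j hjltn hr2).2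
          rw [hpj] at this
          exact this hmem'
        rw [hdo, hdi]
        rw [Set.ncard_insert_of_notMem hnmo ((dout_finite hF.fin x).diff)]
        have e1 := Set.ncard_diff_singleton_add_one hmo (dout_finite hF.fin x)
        omega
      · -- arrive forward, leave reverse
        have hdo : dout F' x = dout F x := by
          ext y
          simp only [dout, Set.mem_setOf_eq, hmem, coutRev, coutFwd]
          tauto
        have hdi : din F' x = insert (p (j-1)) (din F x \ {p (j+1)}) := by
          ext y
          simp only [din, Set.mem_setOf_eq, Set.mem_insert_iff, Set.mem_diff,
            Set.mem_singleton_iff, hmem, cinRev, cinFwd]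
          tauto
        have hmi : p (j+1) ∈ din F x := by
          have : (p (j+1), p j) ∈ F := hr2
          rwa [hpj] at this
        have hnmi : p (j-1) ∉ din F x \ {p (j+1)} := by
          rintro ⟨hmem', -⟩
          have := (hfwd (j-1) (by omega) hr1).2
          rw [show j - 1 + 1 = j by omega, hpj] at this
          exact this hmem'
        rw [hdo, hdi]
        rw [Set.ncard_insert_of_notMem hnmi ((din_finite hF.fin x).diff)]
        have e2 := Set.ncard_diff_singleton_add_one hmi (din_finite hF.fin x)
        omega
      · -- both forward
        have hdo : dout F' x = insert (p (j+1)) (dout F x) := by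
          ext y
          simp only [dout, Set.mem_setOf_eq, Set.mem_insert_iff, hmem, coutRev, coutFwd]
          tauto
        have hdi : din F' x = insert (p (j-1)) (din F x) := by
          ext y
          simp only [din, Set.mem_setOf_eq, Set.mem_insert_iff, hmem, cinRev, cinFwd]
          tauto
        have hnmo : p (j+1) ∉ dout F x := by
          intro hmem'
          have := (hfwd j hjltn hr2).2
          rw [hpj] at this
          exact this hmem'
        have hnmi : p (j-1) ∉ din F x := by
          intro hmem'
          have := (hfwd (j-1) (by omega) hr1).2
          rw [show j - 1 + 1 = j by omega, hpj] at this
          exact this hmem'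
        rw [hdo, hdi, Set.ncard_insert_of_notMem hnmo (dout_finite hF.fin x),
          Set.ncard_insert_of_notMem hnmi (din_finite hF.fin x), hconsx]
    · -- x not on the path : degrees unchanged
      push_neg at hon
      have hdo : dout F' x = dout F x := by
        ext y
        simp only [dout, Set.mem_setOf_eq, hmem]
        constructor
        · rintro (⟨hf, -⟩ | ⟨t, ht, -, he⟩)
          · exact hf
          · exact absurd (congrArg Prod.fst he).symm (hon t (by omega))
        · intro hf
          left
          refine ⟨hf, ?_⟩
          rintro ⟨t, ht, -, he⟩
          exact (hon (t+1) (by omega)) (congrArg Prod.fst he).symm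
      have hdi : din F' x = din F x := by
        ext y
        simp only [din, Set.mem_setOf_eq, hmem]
        constructor
        · rintro (⟨hf, -⟩ | ⟨t, ht, -, he⟩)
          · exact hf
          · exact absurd (congrArg Prod.snd he).symm (hon (t+1) (by omega))
        · intro hf
          left
          refine ⟨hf, ?_⟩
          rintro ⟨t, ht, -, he⟩
          exact (hon t (by omega)) (congrArg Prod.snd he).symm
      rw [hdo, hdi]
      exact hF.cons x hxA hxB
  refine ⟨F', ⟨hfinF', hlegal, hcons⟩, ?_⟩
  have hsrc : Srcs A F' = insert a (Srcs A F) := by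
    ext a'
    simp only [Srcs, Set.mem_setOf_eq, Set.mem_insert_iff, hmem]
    constructor
    · rintro ⟨ha', (⟨hf, -⟩ | hfw)⟩
      · exact Or.inr ⟨ha', hf⟩
      · obtain ⟨t, htn, hrv, he⟩ := hfw
        have hpt : p t = (a', false) := (congrArg Prod.fst he).symm
        rcases Nat.eq_zero_or_pos t with h | h
        · left
          rw [h, hp0] at hpt
          exact (Prod.ext_iff.mp hpt).1.symm
        · exact absurd hpt (K1 t h (by omega) a' ha')
    · rintro (rfl | ⟨ha', hf⟩)
      · refine ⟨haA, Or.inr ⟨0, hn1, h00, ?_⟩⟩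
        rw [hp0, h01]
      · refine ⟨ha', Or.inl ⟨hf, ?_⟩⟩
        rintro ⟨t, htn, -, he⟩
        exact K1 (t+1) (by omega) (by omega) a' ha' (congrArg Prod.fst he).symm
  rw [hsrc]
  apply Set.ncard_insert_of_notMem
  · rintro ⟨-, hf⟩
    exact h02 hf
  · exact srcs_finite hF.fin


open Classical in
lemma trail_max {α : Type} (G : Set (α × α)) (hfin : G.Finite)
    (hinj : ∀ x y z, (y, x) ∈ G → (z, x) ∈ G → y = z)
    (x₀ : α) (hout : ∃ y, (x₀, y) ∈ G) (hx₀ : (x₀, x₀) ∉ G) :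
    ∃ (q : ℕ → α) (m : ℕ), 1 ≤ m ∧ q 0 = x₀ ∧ (∀ t < m, (q t, q (t+1)) ∈ G) ∧
      (∀ i ≤ m, ∀ j ≤ m, q i = q j → i = j) ∧
      ((∀ y, (q m, y) ∉ G) ∨ (q m, x₀) ∈ G) := by
  set P : ℕ → Prop := fun m => ∃ q : ℕ → α, q 0 = x₀ ∧ (∀ t < m, (q t, q (t+1)) ∈ G) ∧
      (∀ i ≤ m, ∀ j ≤ m, q i = q j → i = j) with hP
  set N := G.ncard with hN
  have hbound : ∀ m, P m → m ≤ N := by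
    intro m ⟨q, hq0, hqs, hqi⟩
    have : (Finset.range m).card ≤ hfin.toFinset.card := by
      apply Finset.card_le_card_of_injOn (fun t => (q t, q (t+1)))
      · intro t ht
        simp only [Finset.mem_coe, Set.Finite.mem_toFinset]
        exact hqs t (Finset.mem_range.mp ht)
      · intro s hs t ht hst
        simp only [Finset.mem_coe, Finset.mem_range] at hs ht
        have := congrArg Prod.fst hst
        exact hqi s (by omega) t (by omega) this
    rw [hN, Set.ncard_eq_toFinset_card G hfin]
    simpa using this
  obtain ⟨y₀, hy₀⟩ := hout
  have hP1 : P 1 := by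
    refine ⟨fun t => if t = 0 then x₀ else y₀, by simp, ?_, ?_⟩
    · intro t ht
      have : t = 0 := by omega
      subst this; simpa using hy₀
    · intro i hi j hj hij
      interval_cases i <;> interval_cases j <;> simp_all <;>
        first | rfl | (exfalso; exact hx₀ hy₀) | (exfalso; rw [hij] at hy₀; exact hx₀ hy₀)
  set M := Nat.findGreatest P N with hM
  have hPM : P M := Nat.findGreatest_spec (hbound 1 hP1) hP1
  have hM1 : 1 ≤ M := Nat.le_findGreatest (hbound 1 hP1) hP1
  obtain ⟨q, hq0, hqs, hqi⟩ := hPM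
  refine ⟨q, M, hM1, hq0, hqs, hqi, ?_⟩
  by_cases hend : ∃ y, (q M, y) ∈ G
  · obtain ⟨y, hy⟩ := hend
    by_cases hcyc : y = x₀
    · right; rw [← hcyc]; exact hy
    · exfalso
      have hynot : ∀ t ≤ M, q t ≠ y := by
        intro t ht hqt
        rcases Nat.eq_zero_or_pos t with h | h
        · subst h; rw [hq0] at hqt; exact hcyc hqt.symm
        · have harc : (q (t-1), q t) ∈ G := by
            have := hqs (t-1) (by omega)
            rwa [show t - 1 + 1 = t by omega] at this
          rw [hqt] at harc
          have := hinj y (q (t-1)) (q M) harc hy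
          have := hqi (t-1) (by omega) M le_rfl this
          omega
      have hPM1 : P (M + 1) := by
        refine ⟨fun t => if t ≤ M then q t else y, by simp [hq0], ?_, ?_⟩
        · intro t ht
          rcases Nat.lt_or_ge t M with h | h
          · have h1 : t ≤ M := by omega
            have h2 : t + 1 ≤ M := by omega
            simpa [h1, h2] using hqs t h
          · have ht' : t = M := by omega
            subst ht'
            simp only [le_refl, if_pos]
            rw [if_neg (by omega)]
            exact hy
        · intro i hi j hj hij
          by_cases h1 : i ≤ M <;> by_cases h2 : j ≤ M
          · simp only [if_pos h1, if_pos h2] at hij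
            exact hqi i h1 j h2 hij
          · simp only [if_pos h1, if_neg h2] at hij
            exact absurd hij (hynot i h1)
          · simp only [if_neg h1, if_pos h2] at hij
            exact absurd hij.symm (hynot j h2)
          · omega
      have := Nat.findGreatest_is_greatest (show Nat.findGreatest P N < M + 1 by omega)
        (hbound (M+1) hPM1)
      exact this hPM1
  · left; push_neg at hend; exact hend


set_option maxHeartbeats 1000000 in
lemma cutlemma (hF : IsFlow Q A B F) (hA : ∀ u v, Q u v → v ∉ A)
    (hB : ∀ u v, Q u v → u ∉ B)
    (hnr : ∀ b ∈ B, ((b : W), true) ∉ Rch Q A F) :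
    ∃ S : Set W, S.Finite ∧ S.ncard ≤ (Srcs A F).ncard ∧
      ∀ (ω : ℕ → W) (n : ℕ), (∀ i < n, Q (ω i) (ω (i+1))) → ω 0 ∈ A → ω n ∈ B →
        ∃ i ≤ n, ω i ∈ S := by
  set S : Set W := {v | ((v : W), false) ∈ Rch Q A F ∧ ((v : W), true) ∉ Rch Q A F} with hS
  have hSsat : ∀ v ∈ S, (((v : W), false), ((v : W), true)) ∈ F := by
    rintro v ⟨h1, h2⟩
    by_contra hni
    exact h2 (rch_step h1 (Or.inl ⟨Or.inl ⟨rfl, rfl, rfl⟩, hni⟩))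
  -- the hitting property
  have hhit : ∀ (ω : ℕ → W) (n : ℕ), (∀ i < n, Q (ω i) (ω (i+1))) → ω 0 ∈ A → ω n ∈ B →
      ∃ i ≤ n, ω i ∈ S := by
    intro ω n hωs hω0 hωn
    set ζ : ℕ → W × Bool := fun k => (ω (k/2), decide (k % 2 = 1)) with hζ
    have hg0 : ζ 0 ∈ Rch Q A F := by
      have : ζ 0 = ((ω 0 : W), false) := by simp [hζ]
      rw [this]; exact rch_src hω0
    have hgend : ζ (2*n+1) ∉ Rch Q A F := by
      have : ζ (2*n+1) = ((ω n : W), true) := by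
        simp only [hζ]
        have e1 : (2*n+1)/2 = n := by omega
        have e2 : (2*n+1) % 2 = 1 := by omega
        rw [e1, e2]; simp
      rw [this]; exact hnr _ hωn
    obtain ⟨k, hk, hgk, hgk1⟩ := cross_down (fun k => ζ k ∈ Rch Q A F) hg0 hgend
    rcases Nat.even_or_odd k with ⟨i, hi⟩ | ⟨i, hi⟩
    · -- k = 2 i : internal crossing, ω i ∈ S
      refine ⟨i, by omega, ?_, ?_⟩
      · have : ζ k = ((ω i : W), false) := by
          simp only [hζ]
          have e1 : k/2 = i := by omega
          have e2 : k % 2 = 0 := by omega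
          rw [e1, e2]; simp
        rwa [this] at hgk
      · have : ζ (k+1) = ((ω i : W), true) := by
          simp only [hζ]
          have e1 : (k+1)/2 = i := by omega
          have e2 : (k+1) % 2 = 1 := by omega
          rw [e1, e2]; simp
        rwa [this] at hgk1
    · -- k = 2 i + 1 : edge crossing, impossible
      exfalso
      have hin : i < n := by omega
      have hQ := hωs i hin
      have hζk : ζ k = ((ω i : W), true) := by
        simp only [hζ]
        have e1 : k/2 = i := by omega
        have e2 : k % 2 = 1 := by omega
        rw [e1, e2]; simp
      have hζk1 : ζ (k+1) = ((ω (i+1) : W), false) := by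
        simp only [hζ]
        have e1 : (k+1)/2 = i+1 := by omega
        have e2 : (k+1) % 2 = 0 := by omega
        rw [e1, e2]; simp
      rw [hζk] at hgk; rw [hζk1] at hgk1
      have hedge : (((ω i : W), true), ((ω (i+1) : W), false)) ∈ F := by
        by_contra hni
        exact hgk1 (rch_step hgk (Or.inl ⟨Or.inr ⟨rfl, rfl, hQ⟩, hni⟩))
      obtain ⟨y, hy, hres⟩ := rch_pred hgk rfl
      rcases hres with ⟨harc, hni⟩ | hrev
      · have hyeq : y = ((ω i : W), false) := arc_in_true harc
        rw [hyeq] at hni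
        have hcons := hF.cons ((ω i : W), true) (by simp) (by simp [hB _ _ hQ])
        have hdin : din F ((ω i : W), true) = ∅ := by
          rw [Set.eq_empty_iff_forall_notMem]
          intro z hz
          have h' : Arc Q z (((ω i) : W), true) := hF.legal _ hz
          rw [arc_in_true h'] at hz
          exact hni hz
        rw [hdin] at hcons
        simp only [Set.ncard_empty] at hcons
        have : dout F ((ω i : W), true) = ∅ :=
          (Set.ncard_eq_zero (dout_finite hF.fin _)).mp hcons
        rw [Set.eq_empty_iff_forall_notMem] at this
        exact this _ hedge
      · have := flow_fun hF hA hB hrev hedge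
        rw [this] at hy
        exact hgk1 hy
  -- backward chains give an injection of S into the sources
  have H : ∀ v : W, ∃ (av : W) (r : ℕ → W × Bool) (m : ℕ), v ∈ S →
      av ∈ Srcs A F ∧ r 0 = ((av : W), false) ∧ r m = ((v : W), false) ∧
      (∀ t < m, (r t, r (t+1)) ∈ F) ∧ (∀ y, (y, r 0) ∉ F) := by
    intro v
    by_cases hv : v ∈ S
    · by_cases hvA : v ∈ A
      · refine ⟨v, fun _ => ((v : W), false), 0, fun _ => ⟨⟨hvA, hSsat v hv⟩, rfl, rfl,
          by omega, ?_⟩⟩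
        intro y hy
        have := din_srcA hF hA hvA
        rw [Set.eq_empty_iff_forall_notMem] at this
        exact this y hy
      · -- build the backward trail
        have hG'fin : ({e : (W × Bool) × (W × Bool) | (e.2, e.1) ∈ F}).Finite := by
          apply (hF.fin.image (fun e => (e.2, e.1))).subset
          rintro ⟨x, y⟩ he
          exact ⟨(y, x), he, rfl⟩
        have hG'inj : ∀ x y z : W × Bool,
            (y, x) ∈ {e : (W × Bool) × (W × Bool) | (e.2, e.1) ∈ F} →
            (z, x) ∈ {e : (W × Bool) × (W × Bool) | (e.2, e.1) ∈ F} → y = z := by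
          intro x y z h1 h2
          exact flow_fun hF hA hB h1 h2
        have hout : ∃ y, ((((v : W), false) : W × Bool), y) ∈
            {e : (W × Bool) × (W × Bool) | (e.2, e.1) ∈ F} := by
          have hcons := hF.cons ((v : W), false) (by simp [hvA]) (by simp)
          have h1 : ((v : W), true) ∈ dout F ((v : W), false) := hSsat v hv
          have h2 : (dout F ((v : W), false)).ncard ≠ 0 := by
            intro h
            rw [Set.ncard_eq_zero (dout_finite hF.fin _)] at h
            rw [Set.eq_empty_iff_forall_notMem] at h
            exact h _ h1
          rw [hcons] at h2
          obtain ⟨y, hy⟩ := Set.nonempty_of_ncard_ne_zero h2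
          exact ⟨y, hy⟩
        have hx₀ : ((((v : W), false) : W × Bool), (((v : W), false) : W × Bool)) ∉
            {e : (W × Bool) × (W × Bool) | (e.2, e.1) ∈ F} := by
          intro h
          have h' : Arc Q (((v : W), false) : W × Bool) (((v : W), false) : W × Bool) :=
            hF.legal _ h
          have := arc_out_false h'
          simpa using congrArg Prod.snd this
        obtain ⟨q, m, hm1, hq0, hqs, hqinj, hend⟩ :=
          trail_max _ hG'fin hG'inj ((v : W), false) hout hx₀
        have hqsF : ∀ t < m, (q (t+1), q t) ∈ F := fun t ht => hqs t ht
        -- rule out the cycle alternative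
        have hnocyc : ∀ y, (y, q m) ∉ F := by
          rcases hend with h | hcyc
          · intro y hy
            exact h y hy
          · exfalso
            have hqmF : (((v : W), false), q m) ∈ F := hcyc
            have h' : Arc Q (((v : W), false) : W × Bool) (q m) := hF.legal _ hqmF
            have hqm : q m = ((v : W), true) := arc_out_false h'
            have hgq0 : q 0 ∈ Rch Q A F := by rw [hq0]; exact hv.1
            have hgqm : q m ∉ Rch Q A F := by rw [hqm]; exact hv.2
            obtain ⟨t, htm, hgt, hgt1⟩ := cross_down (fun t => q t ∈ Rch Q A F) hgq0 hgqm
            exact hgt1 (rch_step hgt (Or.inr (hqsF t htm)))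
        -- reverse the trail
        refine ⟨(q m).1, fun t => q (m - t), m, fun _ => ?_⟩
        have hrm : q (m - m) = ((v : W), false) := by
          rw [Nat.sub_self, hq0]
        have hrs : ∀ t < m, (q (m - t), q (m - (t+1))) ∈ F := by
          intro t ht
          have e : m - t = m - (t+1) + 1 := by omega
          rw [e]
          exact hqsF (m - (t+1)) (by omega)
        have hnin : ∀ y, (y, q (m - 0)) ∉ F := by
          intro y hy
          rw [Nat.sub_zero] at hy
          exact hnocyc y hy
        -- identify the start as a source
        have harc1 : (q m, q (m - 1)) ∈ F := by
          have := hrs 0 (by omega)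
          rwa [Nat.sub_zero] at this
        have hstart : (q m).1 ∈ A ∧ (q m).2 = false := by
          by_contra hnsrc
          by_cases hsnk : (q m).1 ∈ B ∧ (q m).2 = true
          · have he : q m = ((q m).1, true) := Prod.ext rfl hsnk.2
            have := dout_snkB hF hB hsnk.1
            rw [Set.eq_empty_iff_forall_notMem] at this
            apply this (q (m-1))
            rw [← he]
            exact harc1
          · have hcons := hF.cons (q m) hnsrc hsnk
            have hdin0 : din F (q m) = ∅ := by
              rw [Set.eq_empty_iff_forall_notMem]
              intro y hy
              exact hnocyc y hy
            rw [hdin0] at hcons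
            simp only [Set.ncard_empty] at hcons
            have : dout F (q m) = ∅ :=
              (Set.ncard_eq_zero (dout_finite hF.fin _)).mp hcons
            rw [Set.eq_empty_iff_forall_notMem] at this
            exact this _ harc1
        have hqmeq : q m = (((q m).1 : W), false) := Prod.ext rfl hstart.2
        have hint : (((q m).1, false), ((q m).1, true)) ∈ F := by
          have h' : Arc Q (q m) (q (m-1)) := hF.legal _ harc1
          rw [hqmeq] at h'
          have h2 := arc_out_false h'
          rw [h2] at harc1
          rwa [← hqmeq]
        refine ⟨⟨hstart.1, hint⟩, by show q (m - 0) = _; rw [Nat.sub_zero]; exact hqmeq, hrm, hrs, hnin⟩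
    · exact ⟨v, fun _ => ((v : W), false), 0, fun h => absurd h hv⟩
  choose av r m hH using H
  have key : ∀ v₁ v₂ : W, v₁ ∈ S → v₂ ∈ S → av v₁ = av v₂ → m v₁ ≤ m v₂ → v₁ = v₂ := by
    intro v₁ v₂ hv₁ hv₂ heq hle
    obtain ⟨hs₁, h10, h1m, h1s, h1n⟩ := hH v₁ hv₁
    obtain ⟨hs₂, h20, h2m, h2s, h2n⟩ := hH v₂ hv₂
    have hcoin : ∀ t, t ≤ m v₁ → r v₁ t = r v₂ t := by
      intro t
      induction t with
      | zero => intro _; rw [h10, h20, heq]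
      | succ t ih =>
        intro ht
        have h1 := h1s t (by omega)
        have h2 := h2s t (by omega)
        rw [← ih (by omega)] at h2
        exact flow_fun hF hA hB h1 h2
    rcases eq_or_lt_of_le hle with he | hlt
    · have hh := (hcoin (m v₁) le_rfl).symm.trans h1m
      rw [he, h2m] at hh
      exact congrArg Prod.fst hh |>.symm
    · exfalso
      have hm1 : r v₂ (m v₁) = ((v₁ : W), false) := (hcoin (m v₁) le_rfl).symm.trans h1m
      have harc := h2s (m v₁) hlt
      rw [hm1] at harc
      have h' : Arc Q (((v₁ : W), false) : W × Bool) (r v₂ (m v₁ + 1)) := hF.legal _ harc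
      have hnext : r v₂ (m v₁ + 1) = ((v₁ : W), true) := arc_out_false h'
      have hga : r v₂ (m v₁ + 1) ∉ Rch Q A F := by rw [hnext]; exact hv₁.2
      have hgb : r v₂ (m v₂) ∈ Rch Q A F := by rw [h2m]; exact hv₂.1
      obtain ⟨t, ht1, ht2, hgt, hgt1⟩ :=
        cross_up (fun t => r v₂ t ∈ Rch Q A F) (show m v₁ + 1 ≤ m v₂ by omega) hga hgb
      exact hgt (rch_step hgt1 (Or.inr (h2s t (by omega))))
  have hinj : Set.InjOn av S := by
    intro v₁ hv₁ v₂ hv₂ heq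
    rcases le_total (m v₁) (m v₂) with h | h
    · exact key v₁ v₂ hv₁ hv₂ heq h
    · exact (key v₂ v₁ hv₂ hv₁ heq.symm h).symm
  have himg : av '' S ⊆ Srcs A F := by
    rintro _ ⟨v, hv, rfl⟩
    exact (hH v hv).1
  have hSfin : S.Finite :=
    Set.Finite.of_finite_image ((srcs_finite hF.fin).subset himg) hinj
  refine ⟨S, hSfin, ?_, hhit⟩
  calc S.ncard = (av '' S).ncard := (Set.ncard_image_of_injOn hinj).symm
    _ ≤ (Srcs A F).ncard := Set.ncard_le_ncard himg (srcs_finite hF.fin)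

set_option maxHeartbeats 2000000 in
theorem menger (hAB : Disjoint A B) (hA : ∀ u v, Q u v → v ∉ A)
    (hB : ∀ u v, Q u v → u ∉ B) (ℓ : ℕ) :
    (∃ (P : Fin ℓ → ℕ → W) (len : Fin ℓ → ℕ),
       (∀ i, (∀ t < len i, Q (P i t) (P i (t+1))) ∧
         (∀ s ≤ len i, ∀ t ≤ len i, P i s = P i t → s = t) ∧
         P i 0 ∈ A ∧ P i (len i) ∈ B ∧ 1 ≤ len i) ∧
       (∀ i j, i ≠ j → ∀ s ≤ len i, ∀ t ≤ len j, P i s ≠ P j t)) ∨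
    (∃ S : Set W, S.Finite ∧ S.ncard < ℓ ∧
       ∀ (ω : ℕ → W) (n : ℕ), (∀ i < n, Q (ω i) (ω (i+1))) → ω 0 ∈ A → ω n ∈ B →
         ∃ i ≤ n, ω i ∈ S) := by
  have haux : ∀ t, t ≤ ℓ → (∃ F, IsFlow Q A B F ∧ (Srcs A F).ncard = t) ∨
      (∃ S : Set W, S.Finite ∧ S.ncard < ℓ ∧
       ∀ (ω : ℕ → W) (n : ℕ), (∀ i < n, Q (ω i) (ω (i+1))) → ω 0 ∈ A → ω n ∈ B →
         ∃ i ≤ n, ω i ∈ S) := by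
    intro t
    induction t with
    | zero =>
      intro _
      left
      refine ⟨∅, ⟨Set.finite_empty, by simp, ?_⟩, ?_⟩
      · intro x _ _
        have h1 : dout (∅ : Set ((W × Bool) × (W × Bool))) x = ∅ := by
          ext y; simp [dout]
        have h2 : din (∅ : Set ((W × Bool) × (W × Bool))) x = ∅ := by
          ext y; simp [din]
        rw [h1, h2]
      · have : Srcs A (∅ : Set ((W × Bool) × (W × Bool))) = ∅ := by
          ext a; simp [Srcs]
        rw [this]; exact Set.ncard_empty _
    | succ t ih =>
      intro ht
      rcases ih (by omega) with ⟨F, hF, hc⟩ | hcut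
      · by_cases hb : ∃ b ∈ B, ((b : W), true) ∈ Rch Q A F
        · obtain ⟨F', hF', hc'⟩ := augment hF hA hB hb
          exact Or.inl ⟨F', hF', by omega⟩
        · push_neg at hb
          obtain ⟨S, hS1, hS2, hS3⟩ := cutlemma hF hA hB hb
          exact Or.inr ⟨S, hS1, by omega, hS3⟩
      · exact Or.inr hcut
  rcases haux ℓ le_rfl with ⟨F, hF, hc⟩ | hcut
  swap
  · exact Or.inr hcut
  left
  -- enumerate the sources
  have hsf : (Srcs A F).Finite := srcs_finite hF.fin
  have hcard : hsf.toFinset.card = ℓ := by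
    rw [← Set.ncard_eq_toFinset_card _ hsf, hc]
  set g : Fin ℓ → W := fun i => (hsf.toFinset.equivFin.symm (Fin.cast hcard.symm i) : W)
    with hg
  have hgmem : ∀ i, g i ∈ Srcs A F := by
    intro i
    have := (hsf.toFinset.equivFin.symm (Fin.cast hcard.symm i)).2
    rwa [Set.Finite.mem_toFinset] at this
  have hginj : Function.Injective g := by
    intro i j h
    have := hsf.toFinset.equivFin.symm.injective (Subtype.ext h)
    exact Fin.val_inj.mp (by simpa using congrArg Fin.val this)
  -- extract a trail from each source
  have H : ∀ i : Fin ℓ, ∃ (q : ℕ → W × Bool) (mm : ℕ), 1 ≤ mm ∧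
      q 0 = ((g i : W), false) ∧ (∀ s < mm, (q s, q (s+1)) ∈ F) ∧
      (∀ s ≤ mm, ∀ u ≤ mm, q s = q u → s = u) ∧
      (q mm).1 ∈ B ∧ (q mm).2 = true := by
    intro i
    obtain ⟨hgA, hgarc⟩ := hgmem i
    have hinj : ∀ x y z : W × Bool, (y, x) ∈ F → (z, x) ∈ F → y = z :=
      fun x y z h1 h2 => flow_inj hF hA hB h1 h2
    have hout : ∃ y, ((((g i : W), false) : W × Bool), y) ∈ F := ⟨_, hgarc⟩
    have hx₀ : ((((g i : W), false) : W × Bool), (((g i : W), false) : W × Bool)) ∉ F := by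
      intro h
      have h' : Arc Q (((g i : W), false) : W × Bool) (((g i : W), false) : W × Bool) :=
        hF.legal _ h
      simpa using congrArg Prod.snd (arc_out_false h')
    obtain ⟨q, mm, hm1, hq0, hqs, hqinj, hend⟩ := trail_max F hF.fin hinj _ hout hx₀
    have hnd : ∀ y, (q mm, y) ∉ F := by
      rcases hend with h | hcyc
      · exact h
      · exfalso
        have := din_srcA hF hA hgA
        rw [Set.eq_empty_iff_forall_notMem] at this
        exact this (q mm) hcyc
    have harcin : (q (mm - 1), q mm) ∈ F := by
      have := hqs (mm - 1) (by omega)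
      rwa [show mm - 1 + 1 = mm by omega] at this
    have hsnk : (q mm).1 ∈ B ∧ (q mm).2 = true := by
      by_contra hns
      by_cases hsrc : (q mm).1 ∈ A ∧ (q mm).2 = false
      · have he : q mm = ((q mm).1, false) := Prod.ext rfl hsrc.2
        have := din_srcA hF hA hsrc.1
        rw [Set.eq_empty_iff_forall_notMem] at this
        apply this (q (mm - 1))
        rw [← he]
        exact harcin
      · have hcons := hF.cons (q mm) hsrc hns
        have hdo : dout F (q mm) = ∅ := by
          rw [Set.eq_empty_iff_forall_notMem]
          exact hnd
        rw [hdo] at hcons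
        simp only [Set.ncard_empty] at hcons
        have : din F (q mm) = ∅ :=
          (Set.ncard_eq_zero (din_finite hF.fin _)).mp hcons.symm
        rw [Set.eq_empty_iff_forall_notMem] at this
        exact this _ harcin
    exact ⟨q, mm, hm1, hq0, hqs, hqinj, hsnk.1, hsnk.2⟩
  choose q mm hmm1 hq0 hqs hqinj hqB hqT using H
  -- parity of the trails
  have hpar : ∀ i : Fin ℓ, ∀ s ≤ mm i, ((q i s).2 = true ↔ s % 2 = 1) := by
    intro i s
    induction s with
    | zero =>
      intro _
      rw [hq0]
      simp
    | succ s ihs =>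
      intro hs
      have harc := hF.legal _ (hqs i s (by omega))
      rcases harc with ⟨h1, h2, h3⟩ | ⟨h1, h2, h3⟩
      · have hs0 : s % 2 = 0 := by
          rcases Nat.mod_two_eq_zero_or_one s with h | h
          · exact h
          · exfalso
            have := (ihs (by omega)).mpr h
            rw [h1] at this
            simp at this
        rw [h2]
        constructor
        · intro _; omega
        · intro _; rfl
      · have hs1 : s % 2 = 1 := (ihs (by omega)).mp h1
        rw [h2]
        constructor
        · intro h; simp at h
        · intro h; omega
  have hmodd : ∀ i, mm i % 2 = 1 := fun i => (hpar i (mm i) le_rfl).mp (hqT i)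
  -- the projected paths
  set len : Fin ℓ → ℕ := fun i => mm i / 2 with hlen
  set P : Fin ℓ → ℕ → W := fun i s => (q i (2*s)).1 with hP
  have hmeq : ∀ i, mm i = 2 * len i + 1 := by
    intro i
    have := hmodd i
    simp only [hlen]
    omega
  have hsndF : ∀ i s, s % 2 = 0 → s ≤ mm i → (q i s).2 = false := by
    intro i s h0 hsm
    rcases Bool.eq_false_or_eq_true (q i s).2 with h | h
    · exfalso
      have := (hpar i s hsm).mp h
      omega
    · exact h
  have hsndT : ∀ i s, s % 2 = 1 → s ≤ mm i → (q i s).2 = true := by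
    intro i s h1 hsm
    exact (hpar i s hsm).mpr h1
  have hfst : ∀ i s, s ≤ len i → q i (2*s) = ((P i s : W), false) := by
    intro i s hs
    have h2s : 2*s ≤ mm i := by
      have := hmeq i
      simp only [hlen] at hs ⊢
      omega
    have := hsndF i (2*s) (by omega) h2s
    exact Prod.ext rfl this
  have hb1 : ∀ i s, s < len i → 2*s+1 ≤ mm i := by
    intro i s hs
    have := hmeq i
    simp only [hlen] at hs
    omega
  have hsame : ∀ i s, s < len i → (q i (2*s+1)).1 = P i s := by
    intro i s hs
    have harc := hF.legal _ (hqs i (2*s) (by have := hmeq i; simp only [hlen] at hs; omega))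
    rcases harc with ⟨h1, h2, h3⟩ | ⟨h1, h2, h3⟩
    · rw [← h3]
    · exfalso
      have := hsndF i (2*s) (by omega) (by have := hmeq i; simp only [hlen] at hs; omega)
      rw [this] at h1
      simp at h1
  have hsameE : ∀ i, (q i (2*len i + 1)).1 = P i (len i) := by
    intro i
    have harc := hF.legal _ (hqs i (2*len i) (by have := hmeq i; omega))
    rcases harc with ⟨h1, h2, h3⟩ | ⟨h1, h2, h3⟩
    · rw [← h3]
    · exfalso
      have := hsndF i (2*len i) (by omega) (by have := hmeq i; omega)
      rw [this] at h1
      simp at h1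
  have hstep : ∀ i, ∀ s < len i, Q (P i s) (P i (s+1)) := by
    intro i s hs
    have hbnd : 2*s+1 < mm i := by
      have := hmeq i
      simp only [hlen] at hs
      omega
    have harc := hF.legal _ (hqs i (2*s+1) hbnd)
    rcases harc with ⟨h1, h2, h3⟩ | ⟨h1, h2, h3⟩
    · exfalso
      have := hsndT i (2*s+1) (by omega) (by omega)
      rw [this] at h1
      simp at h1
    · have e1 : (q i (2*s+1)).1 = P i s := hsame i s hs
      have e2 : (q i (2*s+1+1)).1 = P i (s+1) := by
        have e : 2*s+1+1 = 2*(s+1) := by omega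
        rw [e]
      rw [e1, e2] at h3
      exact h3
  have hpinj : ∀ i, ∀ s ≤ len i, ∀ u ≤ len i, P i s = P i u → s = u := by
    intro i s hs u hu h
    have e1 := hfst i s hs
    have e2 := hfst i u hu
    rw [h] at e1
    have := hqinj i (2*s) (by have := hmeq i; simp only [hlen] at hs; omega)
      (2*u) (by have := hmeq i; simp only [hlen] at hu; omega) (e1.trans e2.symm)
    omega
  have hstartA : ∀ i, P i 0 ∈ A := by
    intro i
    have : q i 0 = ((g i : W), false) := hq0 i
    have : P i 0 = g i := by
      show (q i (2*0)).1 = g i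
      rw [show 2*0 = 0 by omega, this]
    rw [this]
    exact (hgmem i).1
  have hendB : ∀ i, P i (len i) ∈ B := by
    intro i
    have : P i (len i) = (q i (mm i)).1 := by
      rw [← hsameE i, ← hmeq i]
    rw [this]
    exact hqB i
  have hlen1 : ∀ i, 1 ≤ len i := by
    intro i
    by_contra h
    have h0 : len i = 0 := by omega
    have := hendB i
    rw [h0] at this
    exact absurd (hstartA i) (fun hi => (Set.disjoint_left.mp hAB) hi this)
  -- cross-disjointness
  have hshare : ∀ i j : Fin ℓ, ∀ s, s ≤ mm i → ∀ u ≤ mm j, q i s = q j u → g i = g j := by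
    intro i j s
    induction s with
    | zero =>
      intro _ u hu hequ
      match u, hu with
      | 0, _ =>
        rw [hq0 i, hq0 j] at hequ
        exact congrArg Prod.fst hequ
      | (u+1), hu =>
        exfalso
        have harc := hqs j u (by omega)
        rw [← hequ, hq0 i] at harc
        have := din_srcA hF hA (hgmem i).1
        rw [Set.eq_empty_iff_forall_notMem] at this
        exact this _ harc
    | succ s ihs =>
      intro hs u hu hequ
      match u, hu with
      | 0, _ =>
        exfalso
        have harc := hqs i s (by omega)
        rw [hequ, hq0 j] at harc
        have := din_srcA hF hA (hgmem j).1
        rw [Set.eq_empty_iff_forall_notMem] at this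
        exact this _ harc
      | (u+1), hu =>
        have harc1 := hqs i s (by omega)
        have harc2 := hqs j u (by omega)
        rw [← hequ] at harc2
        have := flow_inj hF hA hB harc1 harc2
        exact ihs (by omega) u (by omega) this
  refine ⟨P, len, fun i => ⟨hstep i, hpinj i, hstartA i, hendB i, hlen1 i⟩, ?_⟩
  intro i j hij s hs u hu heq
  apply hij
  apply hginj
  apply hshare i j (2*s) (by have := hmeq i; simp only [hlen] at hs; omega)
    (2*u) (by have := hmeq j; simp only [hlen] at hu; omega)
  rw [hfst i s hs, hfst j u hu, heq]

end Flow


set_option maxHeartbeats 1000000 in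
/-- Either there are ℓ directed odd X-walks using every vertex at most
twice in total (counting multiplicity), or a set of at most ℓ−1 vertices meets all
directed odd X-walks. -/
theorem odd_X_walks_half_integral (R : V → V → Prop) (X : Set V) (ℓ : ℕ)
    (hℓ : 0 < ℓ) :
    (∃ (w : Fin ℓ → ℕ → V) (len : Fin ℓ → ℕ),
       (∀ i, IsXWalk R X (w i) (len i) ∧ Odd (len i)) ∧
       (∀ v : V, (∑ i : Fin ℓ, ({j | j ≤ len i ∧ w i j = v} : Set ℕ).ncard) ≤ 2)) ∨
    (∃ Y : Set V, Y.Finite ∧ Y.ncard ≤ ℓ - 1 ∧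
       ∀ (w : ℕ → V) (n : ℕ), IsXWalk R X w n → Odd n → ∃ i ≤ n, w i ∈ Y) := by
  classical
  set Q : (V × Bool) → (V × Bool) → Prop := fun x y =>
    (x.2 = false ∧ y.2 = true ∧ R x.1 y.1) ∨
    (x.2 = true ∧ y.2 = false ∧ R x.1 y.1 ∧ x.1 ∉ X ∧ y.1 ∉ X) with hQ
  set A : Set (V × Bool) := {z | z.1 ∈ X ∧ z.2 = false} with hAdef
  set B : Set (V × Bool) := {z | z.1 ∈ X ∧ z.2 = true} with hBdef
  have hAB : Disjoint A B := by
    rw [Set.disjoint_left]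
    rintro z ⟨-, h2⟩ ⟨-, h4⟩
    rw [h2] at h4
    simp at h4
  have hA : ∀ u v, Q u v → v ∉ A := by
    rintro u v (⟨-, h2, -⟩ | ⟨-, -, -, -, h5⟩) ⟨hv1, hv2⟩
    · rw [h2] at hv2; simp at hv2
    · exact h5 hv1
  have hB : ∀ u v, Q u v → u ∉ B := by
    rintro u v (⟨h1, -, -⟩ | ⟨-, -, -, h4, -⟩) ⟨hu1, hu2⟩
    · rw [h1] at hu2; simp at hu2
    · exact h4 hu1
  rcases menger hAB hA hB ℓ with ⟨P, len, hprops, hdisj⟩ | ⟨S, hSfin, hSlt, hScut⟩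
  · -- packing side
    left
    -- parity of the paths
    have hparP : ∀ i : Fin ℓ, ∀ t ≤ len i, ((P i t).2 = true ↔ t % 2 = 1) := by
      intro i t
      induction t with
      | zero =>
        intro _
        rw [(hprops i).2.2.1.2]
        simp
      | succ t ih =>
        intro ht
        have hq := (hprops i).1 t (by omega)
        rcases hq with ⟨h1, h2, -⟩ | ⟨h1, h2, -⟩
        · have ht0 : t % 2 = 0 := by
            rcases Nat.mod_two_eq_zero_or_one t with h | h
            · exact h
            · exfalso
              have := (ih (by omega)).mpr h
              rw [h1] at this
              simp at this
          rw [h2]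
          constructor
          · intro _; omega
          · intro _; rfl
        · have ht1 : t % 2 = 1 := (ih (by omega)).mp h1
          rw [h2]
          constructor
          · intro h; simp at h
          · intro h; omega
    have hodd : ∀ i, Odd (len i) :=
      fun i => Nat.odd_iff.mpr ((hparP i (len i) le_rfl).mp (hprops i).2.2.2.1.2)
    refine ⟨fun i t => (P i t).1, len, fun i => ⟨⟨?_, ?_, ?_, ?_⟩, hodd i⟩, ?_⟩
    · -- walk steps
      intro t ht
      rcases (hprops i).1 t ht with ⟨-, -, h3⟩ | ⟨-, -, h3, -, -⟩
      · exact h3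
      · exact h3
    · exact (hprops i).2.2.1.1
    · exact (hprops i).2.2.2.1.1
    · -- internal vertices avoid X
      intro t ht0 htl hmem
      rcases Bool.eq_false_or_eq_true (P i t).2 with hb | hb
      · -- snd = true : use the next step
        have hq := (hprops i).1 t (by omega)
        rcases hq with ⟨h1, -, -⟩ | ⟨-, -, -, h4, -⟩
        · rw [hb] at h1
          simp at h1
        · exact h4 hmem
      · -- snd = false : use the previous step
        have hq := (hprops i).1 (t-1) (by omega)
        rcases hq with ⟨-, h2, -⟩ | ⟨-, -, -, -, h5⟩
        · rw [show t - 1 + 1 = t by omega, hb] at h2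
          simp at h2
        · rw [show t - 1 + 1 = t by omega] at h5
          exact h5 hmem
    · -- the multiplicity bound
      intro v
      have hTfin : ∀ i : Fin ℓ, ({j | j ≤ len i ∧ (P i j).1 = v} : Set ℕ).Finite :=
        fun i => (Set.finite_Iic (len i)).subset (fun j hj => hj.1)
      have hUfin : ∀ i : Fin ℓ, ((P i) '' {j | j ≤ len i ∧ (P i j).1 = v}).Finite :=
        fun i => (hTfin i).image _
    -- each image is contained in the two copies of v
      have hUsub : ∀ i : Fin ℓ, (P i) '' {j | j ≤ len i ∧ (P i j).1 = v} ⊆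
          {((v : V), false), ((v : V), true)} := by
        rintro i _ ⟨j, ⟨hj1, hj2⟩, rfl⟩
        rcases Bool.eq_false_or_eq_true (P i j).2 with hb | hb
        · right; exact Prod.ext hj2 hb
        · left; exact Prod.ext hj2 hb
      have hncard : ∀ i : Fin ℓ, ({j | j ≤ len i ∧ (P i j).1 = v} : Set ℕ).ncard =
          ((P i) '' {j | j ≤ len i ∧ (P i j).1 = v}).ncard := by
        intro i
        rw [Set.ncard_image_of_injOn]
        intro s hs u hu h
        exact (hprops i).2.1 s hs.1 u hu.1 h
      set u : Fin ℓ → Finset (V × Bool) := fun i => (hUfin i).toFinset with hu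
      have hdisj' : ∀ i ∈ (Finset.univ : Finset (Fin ℓ)), ∀ j ∈ Finset.univ, i ≠ j →
          Disjoint (u i) (u j) := by
        intro i _ j _ hij
        rw [Finset.disjoint_left]
        intro x hx1 hx2
        rw [hu] at hx1 hx2
        simp only [Set.Finite.mem_toFinset] at hx1 hx2
        obtain ⟨s, hs, rfl⟩ := hx1
        obtain ⟨t, ht, hst⟩ := hx2
        exact hdisj i j hij s hs.1 t ht.1 hst.symm
      calc ∑ i : Fin ℓ, ({j | j ≤ len i ∧ (P i j).1 = v} : Set ℕ).ncard
          = ∑ i : Fin ℓ, (u i).card := by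
            apply Finset.sum_congr rfl
            intro i _
            rw [hncard i, hu]
            exact Set.ncard_eq_toFinset_card _ (hUfin i)
        _ = (Finset.univ.biUnion u).card := (Finset.card_biUnion hdisj').symm
        _ ≤ ({((v : V), false), ((v : V), true)} : Finset (V × Bool)).card := by
            apply Finset.card_le_card
            intro x hx
            rw [Finset.mem_biUnion] at hx
            obtain ⟨i, -, hx⟩ := hx
            rw [hu] at hx
            simp only [Set.Finite.mem_toFinset] at hx
            have := hUsub i hx
            simpa using this
        _ ≤ 2 := Finset.card_insert_le _ _ |>.trans (by simp)
  · -- cut side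
    right
    refine ⟨Prod.fst '' S, hSfin.image _, ?_, ?_⟩
    · have := Set.ncard_image_le (f := Prod.fst) hSfin
      omega
    · intro w n hxw hoddn
      have hn1 : n % 2 = 1 := Nat.odd_iff.mp hoddn
      set ζ : ℕ → V × Bool := fun j => (w j, decide (j % 2 = 1)) with hζ
      have hζsteps : ∀ j < n, Q (ζ j) (ζ (j+1)) := by
        intro j hj
        rcases Nat.mod_two_eq_zero_or_one j with hp | hp
        · left
          refine ⟨?_, ?_, hxw.1 j hj⟩
          · show decide (j % 2 = 1) = false
            simp [hp]
          · show decide ((j+1) % 2 = 1) = true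
            simp [show (j+1) % 2 = 1 by omega]
        · right
          have hj1 : 0 < j := by omega
          have hjn : j + 1 < n := by omega
          refine ⟨?_, ?_, hxw.1 j hj, hxw.2.2.2 j hj1 hj, hxw.2.2.2 (j+1) (by omega) hjn⟩
          · show decide (j % 2 = 1) = true
            simp [hp]
          · show decide ((j+1) % 2 = 1) = false
            simp [show (j+1) % 2 = 0 by omega]
      have hζ0 : ζ 0 ∈ A := ⟨hxw.2.1, by simp [hζ]⟩
      have hζn : ζ n ∈ B := ⟨hxw.2.2.1, by simp [hζ, hn1]⟩
      obtain ⟨i, hin, hiS⟩ := hScut ζ n hζsteps hζ0 hζn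
      exact ⟨i, hin, ⟨ζ i, hiS, rfl⟩⟩
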